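/- In the linear-Gaussian multi-cause model with scaling factor c, if γσ²_U ≠ 0, c ≠ 1, and α ≠ 0, then the shifted coefficient vector β₁(c) = β + Σ_AA^{-1} α · γσ²_U(1 − 1/c) differs from β. Hence two distinct causal coefficient vectors induce the same observed covariance of (A, Y). -/

import Mathlib

open Matrix

/-- Observable covariance of the causes: `Σ_AA = σ²_U ααᵀ + diag(σ²_A)`. -/
def SigmaAA {m : ℕ} (σU2 : ℝ) (α σA2 : Fin m → ℝ) : Matrix (Fin m) (Fin m) ℝ :=
  σU2 • Matrix.vecMulVec α α + Matrix.diagonal σA2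

/-- Observable cause–outcome covariance: `Σ_AY = Σ_AA β + γσ²_U α`. -/
def SigmaAY {m : ℕ} (σU2 : ℝ) (α σA2 β : Fin m → ℝ) (γ : ℝ) : Fin m → ℝ :=
  SigmaAA σU2 α σA2 *ᵥ β + (γ * σU2) • α

/-- The shifted coefficient vector `β₁(c) = β + Σ_AA⁻¹ α · γσ²_U(1 − 1/c)`. -/
noncomputable def beta1 {m : ℕ} (σU2 : ℝ) (α σA2 β : Fin m → ℝ) (γ c : ℝ) : Fin m → ℝ :=
  β + (γ * σU2 * (1 - 1 / c)) • ((SigmaAA σU2 α σA2)⁻¹ *ᵥ α)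

lemma vecMulVec_mulVec' {m : ℕ} (α x : Fin m → ℝ) :
    Matrix.vecMulVec α α *ᵥ x = (α ⬝ᵥ x) • α := by
  funext i
  simp [Matrix.mulVec, dotProduct, Matrix.vecMulVec_apply, Finset.sum_mul,
    Finset.mul_sum]
  exact Finset.sum_congr rfl fun j _ => by ring

lemma sigmaAA_posDef {m : ℕ} (α σA2 : Fin m → ℝ) (σU2 : ℝ)
    (hσA : ∀ i, 0 < σA2 i) (hσU : 0 ≤ σU2) : (SigmaAA σU2 α σA2).PosDef := by
  unfold SigmaAA
  refine Matrix.PosDef.posSemidef_add ?_ (Matrix.PosDef.diagonal hσA)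
  refine Matrix.PosSemidef.of_dotProduct_mulVec_nonneg ?_ ?_
  · ext i j
    simp [Matrix.conjTranspose_apply, Matrix.vecMulVec_apply, mul_comm]
  · intro x
    rw [Matrix.smul_mulVec, vecMulVec_mulVec']
    simp only [dotProduct_smul, smul_eq_mul, star_trivial]
    rw [dotProduct_comm x α]
    nlinarith [mul_self_nonneg (α ⬝ᵥ x)]

theorem beta_shift_nonzero
    {m : ℕ} (α β σA2 : Fin m → ℝ) (γ σU2 c : ℝ)
    (hσA : ∀ i, 0 < σA2 i) (hσU : 0 ≤ σU2)
    (hγσ : γ * σU2 ≠ 0) (hc1 : c ≠ 1) (hc0 : c ≠ 0) (hα : α ≠ 0) :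
    beta1 σU2 α σA2 β γ c ≠ β ∧
    SigmaAA (σU2 / c ^ 2) (c • α) σA2 = SigmaAA σU2 α σA2 ∧
    SigmaAY (σU2 / c ^ 2) (c • α) σA2 (beta1 σU2 α σA2 β γ c) γ
      = SigmaAY σU2 α σA2 β γ := by
  set S := SigmaAA σU2 α σA2 with hSdef
  have hpd : S.PosDef := sigmaAA_posDef α σA2 σU2 hσA hσU
  have hdet : S.det ≠ 0 := ne_of_gt hpd.det_pos
  have hinv : S * S⁻¹ = 1 := Matrix.mul_nonsing_inv S (isUnit_iff_ne_zero.mpr hdet)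
  have hSv : S *ᵥ (S⁻¹ *ᵥ α) = α := by
    rw [Matrix.mulVec_mulVec, hinv, Matrix.one_mulVec]
  have hv : S⁻¹ *ᵥ α ≠ 0 := by
    intro h
    apply hα
    rw [← hSv, h, Matrix.mulVec_zero]
  have ht : γ * σU2 * (1 - 1 / c) ≠ 0 := by
    apply mul_ne_zero hγσ
    intro h
    apply hc1
    field_simp at h
    linarith
  have hAA : SigmaAA (σU2 / c ^ 2) (c • α) σA2 = SigmaAA σU2 α σA2 := by
    unfold SigmaAA
    congr 1
    have : Matrix.vecMulVec (c • α) (c • α) = (c * c) • Matrix.vecMulVec α α := by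
      ext i j
      simp [Matrix.vecMulVec_apply]
      ring
    rw [this, smul_smul]
    have h2 : σU2 / c ^ 2 * (c * c) = σU2 := by
      rw [pow_two]
      exact div_mul_cancel₀ σU2 (mul_ne_zero hc0 hc0)
    rw [h2]
  refine ⟨?_, hAA, ?_⟩
  · intro h
    unfold beta1 at h
    rw [← hSdef] at h
    have : (γ * σU2 * (1 - 1 / c)) • (S⁻¹ *ᵥ α) = 0 := by
      exact add_left_cancel (h.trans (add_zero β).symm)
    rcases smul_eq_zero.mp this with h' | h'
    · exact ht h'
    · exact hv h'
  · unfold SigmaAY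
    rw [hAA, ← hSdef]
    unfold beta1
    rw [← hSdef, Matrix.mulVec_add, Matrix.mulVec_smul, hSv]
    funext i
    simp only [Pi.add_apply, Pi.smul_apply, smul_eq_mul]
    field_simp
    ring
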